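/- Let F be a free group on a finite set and s ∈ F a nontrivial element. Then for every s₁ ∈ F such that s lies in the cyclic subgroup ⟨s₁⟩ and ⟨s₁⟩ ≠ ⟨s⟩, one has |s₁| < |s|. Consequently, there are only finitely many cyclic subgroups of F that contain s. -/

import Mathlib

open List

namespace CycAux

variable {α : Type*} [DecidableEq α]

/-- Non-cancelling adjacency. -/
def R (a b : α × Bool) : Prop := ¬(a.1 = b.1 ∧ a.2 = !b.2)

theorem not_R_iff {a b : α × Bool} : ¬ R a b ↔ b = (a.1, !a.2) := by
  obtain ⟨a1, a2⟩ := a; obtain ⟨b1, b2⟩ := b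
  rw [R, not_not]
  cases a2 <;> cases b2 <;> simp [Prod.ext_iff, eq_comm]

theorem R_self (a : α × Bool) : R a a := by
  simp [R]

theorem exists_of_not_chain' {β : Type*} {S : β → β → Prop} :
    ∀ {l : List β}, ¬ List.Chain' S l →
      ∃ l₁ a b l₂, l = l₁ ++ a :: b :: l₂ ∧ ¬ S a b
  | [], h => absurd List.isChain_nil h
  | [a], h => absurd (List.isChain_singleton a) h
  | a :: b :: t, h => by
      rw [List.Chain', List.isChain_cons_cons] at h
      by_cases hab : S a b
      · obtain ⟨l₁, x, y, l₂, hl, hxy⟩ :=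
          exists_of_not_chain' (fun hc => h ⟨hab, hc⟩)
        exact ⟨a :: l₁, x, y, l₂, by rw [hl]; rfl, hxy⟩
      · exact ⟨[], a, b, t, rfl, hab⟩

theorem chain'_reduce (L : List (α × Bool)) : List.Chain' R (FreeGroup.reduce L) := by
  by_contra h
  obtain ⟨l₁, a, b, l₂, hl, hab⟩ := exists_of_not_chain' h
  rw [not_R_iff] at hab
  exact FreeGroup.reduce.not (x := a.1) (b := a.2) (by rw [hl, hab])

theorem chain'_toWord (x : FreeGroup α) : List.Chain' R x.toWord := by
  rw [← FreeGroup.reduce_toWord]; exact chain'_reduce _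

theorem reduce_eq_self : ∀ {L : List (α × Bool)}, List.Chain' R L → FreeGroup.reduce L = L
  | [], _ => rfl
  | [a], _ => rfl
  | a :: b :: L, h => by
      rw [List.Chain', List.isChain_cons_cons] at h
      have : FreeGroup.reduce (b :: L) = b :: L := reduce_eq_self h.2
      rw [FreeGroup.reduce.cons, this]
      exact if_neg h.1

theorem invRev_cons (a : α × Bool) (l : List (α × Bool)) :
    FreeGroup.invRev (a :: l) = FreeGroup.invRev l ++ [(a.1, !a.2)] := by
  simp [FreeGroup.invRev]

/-- Cyclic decomposition of a reduced word. -/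
theorem decomp : ∀ (n : ℕ) (L : List (α × Bool)), L.length ≤ n → List.Chain' R L → L ≠ [] →
    ∃ P C : List (α × Bool), L = P ++ C ++ FreeGroup.invRev P ∧ C ≠ [] ∧
      ∀ a ∈ C.getLast?, ∀ b ∈ C.head?, R a b
  | 0, L, hlen, _, hne => absurd (List.eq_nil_of_length_eq_zero (Nat.le_zero.1 hlen)) hne
  | n + 1, [], _, _, hne => absurd rfl hne
  | n + 1, [h], _, _, _ =>
      ⟨[], [h], by simp [FreeGroup.invRev], by simp, by
        intro a ha b hb
        simp only [List.getLast?_singleton, List.head?_cons, Option.mem_some_iff] at ha hb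
        rw [← ha, ← hb]; exact R_self h⟩
  | n + 1, h :: c :: T', hlen, hch, _ => by
      obtain ⟨M, t, hMt⟩ : ∃ M t, c :: T' = M ++ [t] :=
        by simpa [List.concat_eq_append] using (List.eq_nil_or_concat (c :: T')).resolve_left (by simp)
      have hL2 : h :: c :: T' = (h :: M) ++ [t] := by rw [hMt]; rfl
      by_cases hR : R t h
      · refine ⟨[], h :: c :: T', by simp [FreeGroup.invRev], by simp, ?_⟩
        intro a ha b hb
        rw [hL2, List.getLast?_concat, Option.mem_some_iff] at ha
        rw [List.head?_cons, Option.mem_some_iff] at hb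
        rw [← ha, ← hb]; exact hR
      · rw [not_R_iff] at hR
        -- hR : h = (t.1, !t.2), i.e. t = (h.1, !h.2)
        have hteq : t = (h.1, !h.2) := by rw [hR]; simp
        have hchM : List.Chain' R M := by
          have h2 := hch.tail
          rw [hMt] at h2
          exact (List.isChain_append.1 h2).1
        have hMne : M ≠ [] := by
          rintro rfl
          simp only [List.nil_append, List.cons.injEq] at hMt
          obtain ⟨rfl, rfl⟩ := hMt
          have hRht : R h c := (List.isChain_cons_cons.1 hch).1
          apply hRht
          rw [hteq]
          exact ⟨rfl, by simp⟩
        have hlenM : M.length ≤ n := by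
          have : (h :: c :: T').length = M.length + 2 := by rw [hL2]; simp
          simp only [List.length_cons] at hlen this
          omega
        obtain ⟨P, C, hPC, hCne, hcyc⟩ := decomp n M hlenM hchM hMne
        refine ⟨h :: P, C, ?_, hCne, hcyc⟩
        rw [hL2, hPC, invRev_cons, ← hteq]
        simp

end CycAux

namespace CycAux

variable {α : Type*} [DecidableEq α]

theorem flat_rep {C : List (α × Bool)} (hC : C ≠ []) (hch : List.Chain' R C)
    (hcyc : ∀ a ∈ C.getLast?, ∀ b ∈ C.head?, R a b) :
    ∀ n : ℕ, 1 ≤ n → List.Chain' R (List.flatten (List.replicate n C)) ∧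
      (List.flatten (List.replicate n C)).head? = C.head? ∧
      (List.flatten (List.replicate n C)).getLast? = C.getLast?
  | 1, _ => by simp [hch]
  | n + 2, _ => by
      obtain ⟨h1, h2, h3⟩ := flat_rep hC hch hcyc (n + 1) (by omega)
      have hFne : List.flatten (List.replicate (n + 1) C) ≠ [] := by
        intro he
        rw [he] at h2
        exact hC (by simpa using h2.symm)
      rw [List.replicate_succ, List.flatten_cons]
      refine ⟨List.isChain_append.2 ⟨hch, h1, ?_⟩, ?_, ?_⟩
      · intro a ha b hb
        rw [h2] at hb
        exact hcyc a ha b hb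
      · rw [List.head?_append_of_ne_nil _ hC]
      · rw [List.getLast?_append_of_ne_nil _ hFne, h3]

theorem norm_lt_norm_pow (x : FreeGroup α) (hx : x ≠ 1) {n : ℕ} (hn : 2 ≤ n) :
    x.norm < (x ^ n).norm := by
  obtain ⟨P, C, hPC, hCne, hcyc⟩ := decomp x.toWord.length x.toWord le_rfl (chain'_toWord x)
      (by rwa [ne_eq, FreeGroup.toWord_eq_nil_iff])
  have hch : List.Chain' R (P ++ (C ++ FreeGroup.invRev P)) := by
    rw [← List.append_assoc, ← hPC]; exact chain'_toWord x
  obtain ⟨hchP, hch2, hbPC⟩ := List.isChain_append.1 hch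
  obtain ⟨hchC, hchQ, hbCQ⟩ := List.isChain_append.1 hch2
  set F := List.flatten (List.replicate n C) with hF
  obtain ⟨hchF, hFhead, hFlast⟩ := flat_rep hCne hchC hcyc n (by omega)
  rw [← hF] at hchF hFhead hFlast
  have hFne : F ≠ [] := by
    intro he
    rw [he] at hFhead
    exact hCne (by simpa using hFhead.symm)
  have hWred : List.Chain' R (P ++ (F ++ FreeGroup.invRev P)) := by
    refine List.isChain_append.2 ⟨hchP, List.isChain_append.2 ⟨hchF, hchQ, ?_⟩, ?_⟩
    · intro a ha b hb; rw [hFlast] at ha; exact hbCQ a ha b hb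
    · intro a ha b hb
      rw [List.head?_append_of_ne_nil _ hFne, hFhead] at hb
      refine hbPC a ha b ?_
      rwa [List.head?_append_of_ne_nil _ hCne]
  have hxeq : x = FreeGroup.mk P * FreeGroup.mk C * (FreeGroup.mk P)⁻¹ := by
    rw [FreeGroup.inv_mk, FreeGroup.mul_mk, FreeGroup.mul_mk]
    conv_lhs => rw [← FreeGroup.mk_toWord (x := x), hPC]
  have hxn : x ^ n = FreeGroup.mk (P ++ (F ++ FreeGroup.invRev P)) := by
    rw [hxeq, conj_pow, FreeGroup.pow_mk, FreeGroup.inv_mk, FreeGroup.mul_mk,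
      FreeGroup.mul_mk, List.append_assoc]
  have hnormn : (x ^ n).norm = P.length + (F.length + P.length) := by
    rw [FreeGroup.norm, hxn, FreeGroup.toWord_mk, reduce_eq_self hWred]
    simp [FreeGroup.invRev_length]
  have hnormx : x.norm = P.length + (C.length + P.length) := by
    rw [FreeGroup.norm, hPC]
    simp [FreeGroup.invRev_length]
  have hFlen : F.length = n * C.length := by
    simp [hF, List.length_flatten, List.map_replicate, List.sum_replicate, smul_eq_mul]
  have hClen : 1 ≤ C.length := List.length_pos_iff.2 hCne
  have h2 : 2 * C.length ≤ n * C.length := Nat.mul_le_mul_right _ hn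
  omega

theorem norm_lt_norm_zpow (x : FreeGroup α) (hx : x ≠ 1) {n : ℤ} (hn : 2 ≤ |n|) :
    x.norm < (x ^ n).norm := by
  have key : ∀ m : ℤ, 0 ≤ m → 2 ≤ m → x.norm < (x ^ m).norm := by
    intro m hm hm2
    lift m to ℕ using hm
    rw [zpow_natCast]
    exact norm_lt_norm_pow x hx (by exact_mod_cast hm2)
  rcases abs_cases n with ⟨he, hpos⟩ | ⟨he, hneg⟩
  · exact key n hpos (he ▸ hn)
  · have h2 : (2 : ℤ) ≤ -n := he ▸ hn
    have := key (-n) (by omega) h2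
    rwa [zpow_neg, FreeGroup.norm_inv_eq] at this

end CycAux

theorem cyclic_subgroups_containing_aux (α : Type*) [Finite α] [DecidableEq α]
    (s : FreeGroup α) (hs : s ≠ 1) :
    (∀ s₁ : FreeGroup α, s ∈ Subgroup.zpowers s₁ →
        Subgroup.zpowers s₁ ≠ Subgroup.zpowers s → s₁.norm < s.norm) ∧
    {H : Subgroup (FreeGroup α) |
        (∃ g : FreeGroup α, H = Subgroup.zpowers g) ∧ s ∈ H}.Finite := by
  have main : ∀ s₁ : FreeGroup α, s ∈ Subgroup.zpowers s₁ →
      Subgroup.zpowers s₁ ≠ Subgroup.zpowers s → s₁.norm < s.norm := by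
    intro s₁ hmem hne
    rw [Subgroup.mem_zpowers_iff] at hmem
    obtain ⟨k, hk⟩ := hmem
    have hs₁ : s₁ ≠ 1 := by rintro rfl; rw [one_zpow] at hk; exact hs hk.symm
    have hk1 : k ≠ 1 := by
      rintro rfl; rw [zpow_one] at hk; exact hne (by rw [hk])
    have hkm1 : k ≠ -1 := by
      rintro rfl
      rw [zpow_neg, zpow_one] at hk
      exact hne (by rw [← hk, Subgroup.zpowers_inv])
    have hk0 : k ≠ 0 := by rintro rfl; rw [zpow_zero] at hk; exact hs hk.symm
    have habs : 2 ≤ |k| := by rcases abs_cases k with ⟨h1, _⟩ | ⟨h1, _⟩ <;> omega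
    calc s₁.norm < (s₁ ^ k).norm := CycAux.norm_lt_norm_zpow s₁ hs₁ habs
      _ = s.norm := by rw [hk]
  refine ⟨main, ?_⟩
  have hfin : {g : FreeGroup α | g.norm ≤ s.norm}.Finite := by
    have hsub : {g : FreeGroup α | g.norm ≤ s.norm} ⊆
        FreeGroup.toWord ⁻¹' {l | l.length ≤ s.norm} := fun g hg => hg
    exact (Set.Finite.preimage FreeGroup.toWord_injective.injOn
      (List.finite_length_le _ _)).subset hsub
  refine (hfin.image (fun g => Subgroup.zpowers g)).subset ?_
  rintro H ⟨⟨g, rfl⟩, hsH⟩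
  by_cases heq : Subgroup.zpowers g = Subgroup.zpowers s
  · exact ⟨s, show s.norm ≤ s.norm from le_refl _, heq.symm⟩
  · exact ⟨g, le_of_lt (main g hsH heq), rfl⟩


/-- Let `F` be a free group on a finite set, `s ≠ 1`. Then any `s₁` whose cyclic
subgroup contains `s` and generates a cyclic subgroup different from `⟨s⟩` has
strictly smaller norm; consequently only finitely many cyclic subgroups of `F`
contain `s`. -/
theorem cyclic_subgroups_containing (α : Type*) [Finite α] [DecidableEq α]
    (s : FreeGroup α) (hs : s ≠ 1) :
    (∀ s₁ : FreeGroup α, s ∈ Subgroup.zpowers s₁ →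
        Subgroup.zpowers s₁ ≠ Subgroup.zpowers s → s₁.norm < s.norm) ∧
    {H : Subgroup (FreeGroup α) |
        (∃ g : FreeGroup α, H = Subgroup.zpowers g) ∧ s ∈ H}.Finite := by
  exact cyclic_subgroups_containing_aux α s hs
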